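/- Let τ : ℤ → ℤ be the integer Somos-4 sequence. Then for all m ∈ ℤ, 2 divides τ(m) if and only if 5 divides m; moreover, 4 never divides τ(m) (higher powers of 2 do not appear in the sequence). -/

import Mathlib

/-- The set of reachable states of the Somos-4 sequence:
`(τ n, τ (n+1), τ (n+2), τ (n+3))` mod 8 together with `n` mod 10. -/
def somosS : List (ZMod 8 × ZMod 8 × ZMod 8 × ZMod 8 × ZMod 10) :=
  [(2,1,1,1,0), (6,5,1,1,0),
   (1,1,1,1,1), (1,1,1,5,1), (5,1,1,1,1), (5,1,1,5,1),
   (1,1,1,2,2), (1,1,5,6,2),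
   (1,1,2,3,3), (1,5,6,7,3),
   (1,2,3,7,4), (5,6,7,7,4),
   (2,3,7,7,5), (6,7,7,7,5),
   (3,7,7,3,6), (3,7,7,7,6), (7,7,7,3,6), (7,7,7,7,6),
   (7,7,3,2,7), (7,7,7,6,7),
   (7,3,2,1,8), (7,7,6,5,8),
   (3,2,1,1,9), (7,6,5,1,9)]

lemma somosS_fwd : somosS.Forall (fun s => ∀ x : ZMod 8,
    x * s.1 = s.2.2.2.1 * s.2.1 + s.2.2.1 ^ 2 →
    (s.2.1, s.2.2.1, s.2.2.2.1, x, s.2.2.2.2 + 1) ∈ somosS) := by decide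

lemma somosS_bwd : somosS.Forall (fun s => ∀ x : ZMod 8,
    x * s.2.2.2.1 = s.2.2.1 * s.1 + s.2.1 ^ 2 →
    (x, s.1, s.2.1, s.2.2.1, s.2.2.2.2 - 1) ∈ somosS) := by decide

lemma somosS_extract : somosS.Forall (fun s =>
    ((s.1 = 2 ∨ s.1 = 6) ∧ (s.2.2.2.2 = 0 ∨ s.2.2.2.2 = 5)) ∨
    ((s.1 = 1 ∨ s.1 = 3 ∨ s.1 = 5 ∨ s.1 = 7) ∧
      ¬(s.2.2.2.2 = 0 ∨ s.2.2.2.2 = 5))) := by decide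

def somosInv (τ : ℤ → ℤ) (n : ℤ) : Prop :=
  ((τ n : ZMod 8), (τ (n+1) : ZMod 8), (τ (n+2) : ZMod 8), (τ (n+3) : ZMod 8),
    (n : ZMod 10)) ∈ somosS

/-- In the integer Somos-4 sequence, `2 ∣ τ(m)` iff `5 ∣ m`, and `4` never
divides `τ(m)`. -/
theorem somos4_powers_of_two (τ : ℤ → ℤ)
    (hrec : ∀ n : ℤ, τ (n + 2) * τ (n - 2) = τ (n + 1) * τ (n - 1) + (τ n) ^ 2)
    (h1 : τ 1 = 1) (h2 : τ 2 = 1) (h3 : τ 3 = 1) (h4 : τ 4 = 1) :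
    ∀ m : ℤ, ((2 : ℤ) ∣ τ m ↔ (5 : ℤ) ∣ m) ∧ ¬ (4 : ℤ) ∣ τ m := by
  have fwd := List.forall_iff_forall_mem.mp somosS_fwd
  have bwd := List.forall_iff_forall_mem.mp somosS_bwd
  have ext := List.forall_iff_forall_mem.mp somosS_extract
  -- τ 0 = 2
  have h0 : τ 0 = 2 := by
    have H := hrec 2
    norm_num [h1, h2, h3, h4] at H
    linarith
  -- the invariant holds for all n
  have inv : ∀ n : ℤ, somosInv τ n := by
    have base : somosInv τ 0 := by
      unfold somosInv
      norm_num [h0, h1, h2, h3]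
      decide
    have stepup : ∀ n : ℤ, somosInv τ n → somosInv τ (n + 1) := by
      intro n hn
      have H := hrec (n + 2)
      have e1 : n + 2 + 2 = n + 4 := by ring
      have e2 : n + 2 - 2 = n := by ring
      have e3 : n + 2 + 1 = n + 3 := by ring
      have e4 : n + 2 - 1 = n + 1 := by ring
      rw [e1, e2, e3, e4] at H
      have H8 : (τ (n+4) : ZMod 8) * (τ n : ZMod 8)
          = (τ (n+3) : ZMod 8) * (τ (n+1) : ZMod 8) + (τ (n+2) : ZMod 8) ^ 2 := by
        have := congrArg (fun z : ℤ => (z : ZMod 8)) H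
        push_cast at this
        exact this
      have hmem := fwd _ hn _ H8
      unfold somosInv
      have f1 : n + 1 + 1 = n + 2 := by ring
      have f2 : n + 1 + 2 = n + 3 := by ring
      have f3 : n + 1 + 3 = n + 4 := by ring
      have f4 : ((n + 1 : ℤ) : ZMod 10) = (n : ZMod 10) + 1 := by push_cast; ring
      rw [f1, f2, f3, f4]
      exact hmem
    have stepdown : ∀ n : ℤ, somosInv τ n → somosInv τ (n - 1) := by
      intro n hn
      have H := hrec (n + 1)
      have e1 : n + 1 + 2 = n + 3 := by ring
      have e2 : n + 1 - 2 = n - 1 := by ring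
      have e3 : n + 1 + 1 = n + 2 := by ring
      have e4 : n + 1 - 1 = n := by ring
      rw [e1, e2, e3, e4] at H
      have H8 : (τ (n-1) : ZMod 8) * (τ (n+3) : ZMod 8)
          = (τ (n+2) : ZMod 8) * (τ n : ZMod 8) + (τ (n+1) : ZMod 8) ^ 2 := by
        have := congrArg (fun z : ℤ => (z : ZMod 8)) H
        push_cast at this
        linear_combination this
      have hmem := bwd _ hn _ H8
      unfold somosInv
      have f1 : n - 1 + 1 = n := by ring
      have f2 : n - 1 + 2 = n + 1 := by ring
      have f3 : n - 1 + 3 = n + 2 := by ring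
      have f4 : ((n - 1 : ℤ) : ZMod 10) = (n : ZMod 10) - 1 := by push_cast; ring
      rw [f1, f2, f3, f4]
      exact hmem
    intro n
    induction n using Int.induction_on with
    | zero => exact base
    | succ i ih => exact stepup _ ih
    | pred i ih => exact stepdown _ ih
  intro m
  have hm := inv m
  rcases ext _ hm with ⟨ha, hr⟩ | ⟨ha, hr⟩
  · -- τ m ≡ 2 or 6 mod 8, m ≡ 0 or 5 mod 10
    have h2d : (2 : ℤ) ∣ τ m ∧ ¬ (4 : ℤ) ∣ τ m := by
      have hmod : τ m % 8 = 2 % 8 ∨ τ m % 8 = 6 % 8 := by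
        rcases ha with ha | ha
        · left
          exact (ZMod.intCast_eq_intCast_iff _ _ _).mp (by exact_mod_cast ha)
        · right
          exact (ZMod.intCast_eq_intCast_iff _ _ _).mp (by exact_mod_cast ha)
      omega
    have h5d : (5 : ℤ) ∣ m := by
      have hmod : m % 10 = 0 % 10 ∨ m % 10 = 5 % 10 := by
        rcases hr with hr | hr
        · left
          exact (ZMod.intCast_eq_intCast_iff _ _ _).mp (by exact_mod_cast hr)
        · right
          exact (ZMod.intCast_eq_intCast_iff _ _ _).mp (by exact_mod_cast hr)
      omega
    exact ⟨⟨fun _ => h5d, fun _ => h2d.1⟩, h2d.2⟩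
  · -- τ m odd, m not a multiple of 5
    have hodd : ¬ (2 : ℤ) ∣ τ m := by
      have hmod : τ m % 8 = 1 % 8 ∨ τ m % 8 = 3 % 8 ∨ τ m % 8 = 5 % 8 ∨
          τ m % 8 = 7 % 8 := by
        rcases ha with ha | ha | ha | ha
        · exact Or.inl ((ZMod.intCast_eq_intCast_iff _ _ _).mp (by exact_mod_cast ha))
        · exact Or.inr (Or.inl ((ZMod.intCast_eq_intCast_iff _ _ _).mp (by exact_mod_cast ha)))
        · exact Or.inr (Or.inr (Or.inl ((ZMod.intCast_eq_intCast_iff _ _ _).mp (by exact_mod_cast ha))))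
        · exact Or.inr (Or.inr (Or.inr ((ZMod.intCast_eq_intCast_iff _ _ _).mp (by exact_mod_cast ha))))
      omega
    have h5 : ¬ (5 : ℤ) ∣ m := by
      intro hd
      apply hr
      have : m % 10 = 0 ∨ m % 10 = 5 := by omega
      rcases this with h | h
      · left
        have : m % 10 = 0 % 10 := by omega
        exact_mod_cast (ZMod.intCast_eq_intCast_iff _ _ _).mpr this
      · right
        have : m % 10 = 5 % 10 := by omega
        exact_mod_cast (ZMod.intCast_eq_intCast_iff _ _ _).mpr this
    exact ⟨⟨fun h => absurd h hodd, fun h => absurd h h5⟩, fun h => hodd (dvd_trans ⟨2, rfl⟩ h)⟩
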